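/- Let s : I → ℝ be real analytic on an open interval I, satisfying 2·s·s'' − (s')² = s²·(3s + 2t)·(s + 2t) on I, not identically zero, with an isolated zero at a ∈ I. Then s does not change sign at a: there is a punctured neighborhood of a on which s is either strictly positive throughout or strictly negative throughout. -/

import Mathlib

open Filter Set
open scoped Topology

lemma aux_hasDeriv (g G : ℝ → ℝ) (a : ℝ) (k : ℕ) (z : ℝ) (hgz : HasDerivAt g (G z) z) :
    HasDerivAt (fun w => (w - a) ^ (k + 1) * g w)
      (((k : ℝ) + 1) * (z - a) ^ k * g z + (z - a) ^ (k + 1) * G z) z := by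
  have hp : HasDerivAt (fun w : ℝ => (w - a) ^ (k + 1)) (((k : ℝ) + 1) * (z - a) ^ k) z := by
    have h := ((hasDerivAt_id z).sub_const a).fun_pow (k + 1)
    simpa using h
  simpa using hp.fun_mul hgz

theorem stmt_15 (I : Set ℝ) (hI : IsOpen I) (hI' : IsPreconnected I) (s : ℝ → ℝ) (a : ℝ)
    (ha : a ∈ I) (hs : AnalyticOnNhd ℝ s I)
    (heq : ∀ t ∈ I, 2 * s t * deriv (deriv s) t - (deriv s t) ^ 2
      = (s t) ^ 2 * (3 * s t + 2 * t) * (s t + 2 * t))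
    (hnz : ¬ ∀ t ∈ I, s t = 0)
    (h0 : s a = 0)
    (hiso : ∃ ε > 0, ∀ t ∈ I, t ≠ a → |t - a| < ε → s t ≠ 0) :
    ∃ ε > 0, Set.Ioo (a - ε) (a + ε) ⊆ I ∧
      ((∀ t ∈ Set.Ioo (a - ε) (a + ε), t ≠ a → 0 < s t) ∨
       (∀ t ∈ Set.Ioo (a - ε) (a + ε), t ≠ a → s t < 0)) := by
  obtain ⟨ε₀, hε₀, hiso'⟩ := hiso
  have hsa : AnalyticAt ℝ s a := hs a ha
  have hIa : I ∈ 𝓝 a := hI.mem_nhds ha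
  -- the order of s at a is finite
  have hord : analyticOrderAt s a ≠ ⊤ := by
    intro h
    rw [analyticOrderAt_eq_top] at h
    have h1 : ∀ᶠ z in 𝓝[≠] a, s z = 0 := h.filter_mono nhdsWithin_le_nhds
    have h2 : ∀ᶠ z in 𝓝[≠] a, s z ≠ 0 := by
      have hbI : ∀ᶠ z in 𝓝 a, z ∈ I := hIa
      have hbd : ∀ᶠ z in 𝓝 a, dist z a < ε₀ := Metric.ball_mem_nhds a hε₀
      have hb : ∀ᶠ z in 𝓝 a, z ∈ I ∧ dist z a < ε₀ := hbI.and hbd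
      refine ((hb.filter_mono nhdsWithin_le_nhds).and self_mem_nhdsWithin).mono ?_
      rintro z ⟨⟨hzI, hzd⟩, hza⟩
      exact hiso' z hzI hza (by rwa [Real.dist_eq] at hzd)
    obtain ⟨z, hz1, hz2⟩ := (h1.and h2).exists
    exact hz2 hz1
  obtain ⟨n, hn⟩ := WithTop.ne_top_iff_exists.mp hord
  obtain ⟨g, hg, hga, hsg⟩ := (hsa.analyticOrderAt_eq_natCast (n := n)).mp hn.symm
  simp only [smul_eq_mul] at hsg
  -- n ≥ 1 since s a = 0
  have hn0 : n ≠ 0 := by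
    rintro rfl
    have := hsg.self_of_nhds
    simp [h0] at this
    exact hga this.symm
  obtain ⟨k, rfl⟩ : ∃ k, n = k + 1 := ⟨n - 1, by omega⟩
  -- neighborhood where g is analytic
  obtain ⟨U, hU, hgU⟩ := hg.exists_mem_nhds_analyticOnNhd
  have hgU1 : AnalyticOnNhd ℝ (deriv g) U := hgU.deriv
  -- first derivative formula
  have hd1 : deriv s =ᶠ[𝓝 a]
      (fun z => ((k : ℝ) + 1) * ((z - a) ^ k * g z) + (z - a) ^ (k + 1) * deriv g z) := by
    have h1 : deriv s =ᶠ[𝓝 a] deriv (fun z => (z - a) ^ (k + 1) * g z) :=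
      Filter.EventuallyEq.deriv hsg
    filter_upwards [h1, hU] with z hz hzU
    rw [hz, (aux_hasDeriv g (deriv g) a k z ((hgU z hzU).differentiableAt.hasDerivAt)).deriv]
    ring
  -- deriv s a = 0 from the ODE
  have hds : deriv s a = 0 := by
    have h := heq a ha
    rw [h0] at h
    have h2 : (deriv s a) ^ 2 = 0 := by nlinarith [h]
    exact (pow_eq_zero_iff two_ne_zero).mp h2
  -- k ≥ 1, i.e. n ≥ 2
  have hk0 : k ≠ 0 := by
    rintro rfl
    have h := hd1.self_of_nhds
    simp [hds] at h
    exact hga h.symm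
  obtain ⟨m, rfl⟩ : ∃ m, k = m + 1 := ⟨k - 1, by omega⟩
  set c : ℝ := (m : ℝ) + 2 with hc
  have hcast : ((m : ℝ) + 1 + 1) = c := by rw [hc]; ring
  -- restate first derivative formula
  have hd1' : deriv s =ᶠ[𝓝 a]
      (fun z => c * ((z - a) ^ (m + 1) * g z) + (z - a) ^ (m + 1 + 1) * deriv g z) := by
    refine hd1.mono fun z hz => ?_
    rw [hz]; push_cast; ring
  -- second derivative formula
  have hd2 : ∀ᶠ z in 𝓝 a, deriv (deriv s) z =
      c * ((m : ℝ) + 1) * ((z - a) ^ m * g z) + 2 * c * ((z - a) ^ (m + 1) * deriv g z)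
        + (z - a) ^ (m + 1 + 1) * deriv (deriv g) z := by
    have h1 : deriv (deriv s) =ᶠ[𝓝 a]
        deriv (fun z => c * ((z - a) ^ (m + 1) * g z) + (z - a) ^ (m + 1 + 1) * deriv g z) :=
      Filter.EventuallyEq.deriv hd1'
    filter_upwards [h1, hU] with z hz hzU
    have hA := aux_hasDeriv g (deriv g) a m z ((hgU z hzU).differentiableAt.hasDerivAt)
    have hB := aux_hasDeriv (deriv g) (deriv (deriv g)) a (m + 1) z
      ((hgU1 z hzU).differentiableAt.hasDerivAt)
    rw [hz, ((hA.const_mul c).fun_add hB).deriv]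
    push_cast; ring
  -- the quotient function
  set φ : ℝ → ℝ := fun z =>
    c * (m : ℝ) * (g z) ^ 2 + 2 * c * (z - a) * (g z * deriv g z)
      + (z - a) ^ 2 * (2 * g z * deriv (deriv g) z - (deriv g z) ^ 2)
      - (z - a) ^ 2 * ((g z) ^ 2 * (3 * ((z - a) ^ (m + 1 + 1) * g z) + 2 * z)
          * ((z - a) ^ (m + 1 + 1) * g z + 2 * z)) with hφ
  have key : ∀ᶠ z in 𝓝 a, ((z - a) ^ (m + 1)) ^ 2 * φ z = 0 := by
    filter_upwards [hsg, hd1', hd2, hIa] with z h1 h2 h3 h4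
    have h5 := heq z h4
    rw [h1, h2, h3] at h5
    rw [hφ]
    linear_combination h5
  have hφ0 : ∀ᶠ z in 𝓝[≠] a, φ z = 0 := by
    filter_upwards [key.filter_mono nhdsWithin_le_nhds, self_mem_nhdsWithin] with z h1 h2
    have hz : ((z - a) ^ (m + 1)) ^ 2 ≠ 0 :=
      pow_ne_zero _ (pow_ne_zero _ (sub_ne_zero.mpr h2))
    exact (mul_eq_zero.mp h1).resolve_left hz
  -- continuity of φ at a
  have haU : a ∈ U := mem_of_mem_nhds hU
  have hcg : ContinuousAt g a := hg.continuousAt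
  have hcg1 : ContinuousAt (deriv g) a := (hgU1 a haU).continuousAt
  have hcg2 : ContinuousAt (deriv (deriv g)) a := (hgU1.deriv a haU).continuousAt
  have hcφ : ContinuousAt φ a := by
    rw [hφ]; fun_prop
  have hφa : φ a = 0 := by
    have h5 : Tendsto φ (𝓝[≠] a) (𝓝 (φ a)) := hcφ.continuousWithinAt
    have h6 : Tendsto φ (𝓝[≠] a) (𝓝 0) := by
      have he : (fun _ : ℝ => (0:ℝ)) =ᶠ[𝓝[≠] a] φ := (Filter.eventuallyEq_iff_exists_mem.mpr
        ⟨_, hφ0, fun z hz => hz.symm⟩)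
      exact tendsto_const_nhds.congr' he
    exact tendsto_nhds_unique h5 h6
  -- conclude m = 0
  have hm : (m : ℝ) = 0 := by
    rw [hφ] at hφa
    simp only [sub_self] at hφa
    have h7 : c * (m : ℝ) * (g a) ^ 2 = 0 := by
      by_cases hm0 : m = 0
      · subst hm0; push_cast; ring
      · convert hφa using 1
        have : (0:ℝ) ^ 2 = 0 := by norm_num
        rw [this]; ring
    have hc0 : c ≠ 0 := by positivity
    have hg2 : (g a) ^ 2 ≠ 0 := pow_ne_zero _ hga
    have := mul_eq_zero.mp h7
    rcases this with h | h
    · rcases mul_eq_zero.mp h with h' | h'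
      · exact absurd h' hc0
      · exact h'
    · exact absurd h hg2
  obtain rfl : m = 0 := Nat.cast_eq_zero.mp hm
  rcases hga.lt_or_gt with hneg | hpos
  · -- g a < 0 : s is negative near a
    have hgneg : ∀ᶠ z in 𝓝 a, g z < 0 := hcg (Iio_mem_nhds hneg)
    have hall : ∀ᶠ z in 𝓝 a, z ∈ I ∧ s z = (z - a) ^ (0 + 1 + 1) * g z ∧ g z < 0 := by
      filter_upwards [hIa, hsg, hgneg] with z h1 h2 h3
      exact ⟨h1, h2, h3⟩
    obtain ⟨ε, hε, hb⟩ := Metric.eventually_nhds_iff_ball.mp hall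
    refine ⟨ε, hε, ?_, Or.inr ?_⟩
    · intro t ht
      have htb : t ∈ Metric.ball a ε := by rwa [Real.ball_eq_Ioo]
      exact (hb t htb).1
    · intro t ht htne
      have htb : t ∈ Metric.ball a ε := by rwa [Real.ball_eq_Ioo]
      obtain ⟨-, h2, h3⟩ := hb t htb
      rw [h2]
      have hpos2 : 0 < (t - a) ^ (0 + 1 + 1) := by
        have hne : t - a ≠ 0 := sub_ne_zero.mpr htne
        have h22 : (t - a) ^ (0 + 1 + 1) = (t - a) ^ 2 := by norm_num
        rw [h22]; positivity
      exact mul_neg_of_pos_of_neg hpos2 h3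
  · -- 0 < g a : s is positive near a
    have hgpos : ∀ᶠ z in 𝓝 a, 0 < g z := hcg (Ioi_mem_nhds hpos)
    have hall : ∀ᶠ z in 𝓝 a, z ∈ I ∧ s z = (z - a) ^ (0 + 1 + 1) * g z ∧ 0 < g z := by
      filter_upwards [hIa, hsg, hgpos] with z h1 h2 h3
      exact ⟨h1, h2, h3⟩
    obtain ⟨ε, hε, hb⟩ := Metric.eventually_nhds_iff_ball.mp hall
    refine ⟨ε, hε, ?_, Or.inl ?_⟩
    · intro t ht
      have htb : t ∈ Metric.ball a ε := by rwa [Real.ball_eq_Ioo]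
      exact (hb t htb).1
    · intro t ht htne
      have htb : t ∈ Metric.ball a ε := by rwa [Real.ball_eq_Ioo]
      obtain ⟨-, h2, h3⟩ := hb t htb
      rw [h2]
      have hne : t - a ≠ 0 := sub_ne_zero.mpr htne
      have h22 : (t - a) ^ (0 + 1 + 1) = (t - a) ^ 2 := by norm_num
      rw [h22]; positivity
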